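/- Let (Ω,F,P) be a probability space, p ∈ (0,1), D : Ω → ℝ taking values in {0,1} with P(D = 1) = p, and γ, T : Ω → ℕ with T ≤ γ pointwise. Define D̄*(ω) = T(ω)/γ(ω) if γ(ω) > 0 and D̄*(ω) = 0 otherwise. Assume D is independent of (γ, T), E[D̄* | σ(γ)] = p·1{γ > 0} almost surely, and let p_γ := P(γ > 0) with 0 < p_γ < 1. Then for any μᵈᵉ : ℕ → ℝ with the relevant products integrable, Cov(μᵈᵉ(γ)·D, D̄*) = ( E[μᵈᵉ(γ) | γ > 0] − E[μᵈᵉ(γ) | γ = 0] ) · p² · p_γ · (1 − p_γ). -/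

import Mathlib

open MeasureTheory ProbabilityTheory

/-- Covariance of `μᵈᵉ(γ)·D` with the imputed fraction `D̄*`:
`Cov(μᵈᵉ(γ)·D, D̄*) = (E[μᵈᵉ(γ) | γ > 0] − E[μᵈᵉ(γ) | γ = 0]) · p² · p_γ · (1 − p_γ)`. -/
theorem stmt12
    {Ω : Type*} [MeasurableSpace Ω] (P : Measure Ω) [IsProbabilityMeasure P]
    (p : ℝ) (hp0 : 0 < p) (hp1 : p < 1)
    (D : Ω → ℝ) (hDmeas : Measurable D) (hD01 : ∀ ω, D ω = 0 ∨ D ω = 1)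
    (hDp : P {ω | D ω = 1} = ENNReal.ofReal p)
    (γ T : Ω → ℕ) (hγmeas : Measurable γ) (hTmeas : Measurable T)
    (hTγ : ∀ ω, T ω ≤ γ ω)
    (Dstar : Ω → ℝ)
    (hDstar : ∀ ω, Dstar ω = if 0 < γ ω then (T ω : ℝ) / (γ ω : ℝ) else 0)
    (hindep : IndepFun D (fun ω => (γ ω, T ω)) P)
    (hcond : P[Dstar | MeasurableSpace.comap γ inferInstance]
      =ᵐ[P] fun ω => if 0 < γ ω then p else 0)
    (hpγ0 : 0 < (P {ω | 0 < γ ω}).toReal) (hpγ1 : (P {ω | 0 < γ ω}).toReal < 1)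
    (μde : ℕ → ℝ)
    (hμint : Integrable (fun ω => μde (γ ω)) P)
    (hμDint : Integrable (fun ω => μde (γ ω) * D ω) P)
    (hμDDint : Integrable (fun ω => μde (γ ω) * D ω * Dstar ω) P)
    (hμDstarint : Integrable (fun ω => μde (γ ω) * Dstar ω) P) :
    (∫ ω, (μde (γ ω) * D ω) * Dstar ω ∂P)
        - (∫ ω, μde (γ ω) * D ω ∂P) * (∫ ω, Dstar ω ∂P)
      = ((P {ω | 0 < γ ω}).toReal⁻¹ * (∫ ω in {ω | 0 < γ ω}, μde (γ ω) ∂P)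
          - (P {ω | γ ω = 0}).toReal⁻¹ * (∫ ω in {ω | γ ω = 0}, μde (γ ω) ∂P))
        * p ^ 2 * (P {ω | 0 < γ ω}).toReal * (1 - (P {ω | 0 < γ ω}).toReal) := by
  classical
  have hm : MeasurableSpace.comap γ inferInstance ≤ ‹MeasurableSpace Ω› := hγmeas.comap_le
  have hAmeas : MeasurableSet {ω | 0 < γ ω} :=
    hγmeas (MeasurableSet.of_discrete (s := {n : ℕ | 0 < n}))
  have hAc : {ω | 0 < γ ω}ᶜ = {ω | γ ω = 0} := by
    ext ω; simp [Nat.pos_iff_ne_zero]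
  -- complement probability
  have hPc : (P {ω | γ ω = 0}).toReal = 1 - (P {ω | 0 < γ ω}).toReal := by
    rw [← hAc, measure_compl hAmeas (measure_ne_top _ _), measure_univ,
      ENNReal.toReal_sub_of_le prob_le_one ENNReal.one_ne_top, ENNReal.toReal_one]
  -- Integrability of D
  have hDint : Integrable D P := by
    refine (integrable_const (1 : ℝ)).mono' hDmeas.aestronglyMeasurable ?_
    filter_upwards with ω
    rcases hD01 ω with h | h <;> simp [h]
  -- ∫ D = p
  have hED : ∫ ω, D ω ∂P = p := by
    have hDeq : D = Set.indicator {ω | D ω = 1} (fun _ => (1 : ℝ)) := by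
      funext ω
      rcases hD01 ω with h | h <;>
        simp [Set.indicator_apply, h]
    have hset : MeasurableSet {ω | D ω = 1} := hDmeas (measurableSet_singleton 1)
    rw [hDeq]
    rw [integral_indicator_const (1 : ℝ) hset, measureReal_def, hDp, smul_eq_mul, mul_one,
      ENNReal.toReal_ofReal hp0.le]
  -- strongly measurable of μde∘γ wrt comap
  have hγm : Measurable[MeasurableSpace.comap γ inferInstance] γ :=
    measurable_iff_comap_le.mpr le_rfl
  have hgm : StronglyMeasurable[MeasurableSpace.comap γ inferInstance]
      (fun ω => μde (γ ω)) :=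
    ((measurable_of_countable μde).comp hγm).stronglyMeasurable
  -- Dstar measurable and bounded
  have hDstarfun : Dstar = (fun nt : ℕ × ℕ =>
      if 0 < nt.1 then (nt.2 : ℝ) / (nt.1 : ℝ) else 0) ∘ (fun ω => (γ ω, T ω)) := by
    funext ω; simp [hDstar ω]
  have hDstarmeas : Measurable Dstar := by
    rw [hDstarfun]
    exact (measurable_of_countable _).comp (hγmeas.prodMk hTmeas)
  have hDstarbound : ∀ ω, ‖Dstar ω‖ ≤ 1 := by
    intro ω
    rw [hDstar ω]
    by_cases h : 0 < γ ω
    · simp only [h, if_true]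
      rw [Real.norm_eq_abs, abs_of_nonneg (by positivity)]
      rw [div_le_one (by exact_mod_cast h)]
      exact_mod_cast hTγ ω
    · simp [h]
  have hDstarint : Integrable Dstar P := by
    refine (integrable_const (1 : ℝ)).mono' hDstarmeas.aestronglyMeasurable ?_
    filter_upwards with ω using hDstarbound ω
  -- ∫ Dstar = p * pγ
  have hEDstar : ∫ ω, Dstar ω ∂P = p * (P {ω | 0 < γ ω}).toReal := by
    rw [← integral_condExp hm (f := Dstar), integral_congr_ae hcond]
    have : (fun ω => if 0 < γ ω then p else 0)
        = Set.indicator {ω | 0 < γ ω} (fun _ => p) := by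
      funext ω; simp [Set.indicator_apply]
    rw [this, integral_indicator_const p hAmeas, measureReal_def, smul_eq_mul, mul_comm]
  -- ∫ g * Dstar = p * ∫_A g
  have hgDstar : ∫ ω, μde (γ ω) * Dstar ω ∂P
      = p * ∫ ω in {ω | 0 < γ ω}, μde (γ ω) ∂P := by
    have hpull := condExp_mul_of_stronglyMeasurable_left (μ := P) hgm
      (g := Dstar) (by exact hμDstarint) hDstarint
    have h1 : ∫ ω, μde (γ ω) * Dstar ω ∂P
        = ∫ ω, (P[(fun ω => μde (γ ω)) * Dstar | MeasurableSpace.comap γ inferInstance]) ω ∂P := by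
      rw [integral_condExp hm]; rfl
    have hae : (P[(fun ω => μde (γ ω)) * Dstar | MeasurableSpace.comap γ inferInstance])
        =ᵐ[P] fun ω => μde (γ ω) * (if 0 < γ ω then p else 0) := by
      filter_upwards [hpull, hcond] with ω hω1 hω2
      rw [hω1]; simp only [Pi.mul_apply, hω2]
    rw [h1, integral_congr_ae hae]
    have : (fun ω => μde (γ ω) * (if 0 < γ ω then p else 0))
        = Set.indicator {ω | 0 < γ ω} (fun ω => p * μde (γ ω)) := by
      funext ω
      by_cases h : 0 < γ ω <;> simp [Set.indicator_apply, h, mul_comm]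
    rw [show (fun ω => (fun ω => μde (γ ω)) ω * (fun ω => if 0 < γ ω then p else 0) ω)
        = (fun ω => μde (γ ω) * (if 0 < γ ω then p else 0)) from rfl, this,
      integral_indicator hAmeas, integral_const_mul]
  -- independence consequences
  have hindg : IndepFun D (fun ω => μde (γ ω)) P := by
    have := hindep.comp measurable_id
      (measurable_of_countable (fun nt : ℕ × ℕ => μde nt.1))
    exact this
  have hindgD : IndepFun D (fun ω => μde (γ ω) * Dstar ω) P := by
    have := hindep.comp measurable_id
      (measurable_of_countable (fun nt : ℕ × ℕ =>
        μde nt.1 * (if 0 < nt.1 then (nt.2 : ℝ) / (nt.1 : ℝ) else 0)))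
    have heq : (fun ω => μde (γ ω) * Dstar ω)
        = (fun nt : ℕ × ℕ => μde nt.1 * (if 0 < nt.1 then (nt.2 : ℝ) / (nt.1 : ℝ) else 0))
          ∘ (fun ω => (γ ω, T ω)) := by
      funext ω; simp [hDstar ω]
    rw [heq]; exact this
  -- ∫ (g·D)·Dstar = p * ∫ g·Dstar
  have hE1 : ∫ ω, (μde (γ ω) * D ω) * Dstar ω ∂P
      = p * ∫ ω, μde (γ ω) * Dstar ω ∂P := by
    have : ∫ ω, (μde (γ ω) * D ω) * Dstar ω ∂P
        = ∫ ω, D ω * (μde (γ ω) * Dstar ω) ∂P := by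
      congr 1; funext ω; ring
    have h2 : ∫ ω, D ω * (μde (γ ω) * Dstar ω) ∂P
        = (∫ ω, D ω ∂P) * ∫ ω, μde (γ ω) * Dstar ω ∂P :=
      hindgD.integral_fun_mul_eq_mul_integral hDint.aestronglyMeasurable hμDstarint.aestronglyMeasurable
    rw [this, h2, hED]
  -- ∫ g·D = p * ∫ g
  have hE2 : ∫ ω, μde (γ ω) * D ω ∂P = p * ∫ ω, μde (γ ω) ∂P := by
    have : ∫ ω, μde (γ ω) * D ω ∂P = ∫ ω, D ω * μde (γ ω) ∂P := by
      congr 1; funext ω; ring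
    have h2 : ∫ ω, D ω * μde (γ ω) ∂P
        = (∫ ω, D ω ∂P) * ∫ ω, μde (γ ω) ∂P :=
      hindg.integral_fun_mul_eq_mul_integral hDint.aestronglyMeasurable hμint.aestronglyMeasurable
    rw [this, h2, hED]
  -- split total integral
  have hsplit : ∫ ω, μde (γ ω) ∂P
      = (∫ ω in {ω | 0 < γ ω}, μde (γ ω) ∂P) + (∫ ω in {ω | γ ω = 0}, μde (γ ω) ∂P) := by
    rw [← hAc, integral_add_compl hAmeas hμint]
  -- final algebra
  rw [hE1, hgDstar, hE2, hEDstar, hsplit, hPc]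
  set q := (P {ω | 0 < γ ω}).toReal with hq
  set a := ∫ ω in {ω | 0 < γ ω}, μde (γ ω) ∂P
  set b := ∫ ω in {ω | γ ω = 0}, μde (γ ω) ∂P
  have hq0 : q ≠ 0 := ne_of_gt hpγ0
  have hq1 : 1 - q ≠ 0 := by linarith
  field_simp
  ring
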